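/- Let M₁,…,M_m be finite sets of integers and for u : ℕ → {-1,+1} define u_{[M]} = max_{k∈M} u_k for nonempty finite M and u_{[∅]} = -1. Then ∏_{k=1}^m u_{[M_k]} = (1/2)(-1)^m - (1/2) ∑_{k=0}^m (-2)^k ∑_{K ⊆ {1,…,m}, |K| = k} u_{[M_{[K]}]}, where M_{[K]} = ⋃_{j∈K} M_j and M_{[∅]} = ∅. -/

import Mathlib

/-- `u_{[M]}`: the maximum of `u` over the finite index set `M ⊆ ℕ`, with the
convention `u_{[∅]} = -1`. -/
def uMaxN (u : ℕ → ℤ) (M : Finset ℕ) : ℤ :=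
  if h : M.Nonempty then M.sup' h u else -1

lemma uMaxN_pm (u : ℕ → ℤ) (hu : ∀ k, u k = 1 ∨ u k = -1) (M : Finset ℕ) :
    uMaxN u M = 1 ∨ uMaxN u M = -1 := by
  unfold uMaxN
  split
  · next h =>
    obtain ⟨b, hb, hb'⟩ := Finset.exists_mem_eq_sup' h u
    rw [hb']; exact hu b
  · right; rfl

lemma uMaxN_empty (u : ℕ → ℤ) : uMaxN u ∅ = -1 := by simp [uMaxN]

lemma uMaxN_union (u : ℕ → ℤ) (hu : ∀ k, u k = 1 ∨ u k = -1) (A B : Finset ℕ) :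
    uMaxN u (A ∪ B) = max (uMaxN u A) (uMaxN u B) := by
  have hge : ∀ M : Finset ℕ, (-1 : ℤ) ≤ uMaxN u M := by
    intro M
    rcases uMaxN_pm u hu M with h | h <;> rw [h] <;> norm_num
  rcases A.eq_empty_or_nonempty with hA | hA
  · subst hA
    rw [Finset.empty_union, uMaxN_empty, max_eq_right (hge B)]
  rcases B.eq_empty_or_nonempty with hB | hB
  · subst hB
    rw [Finset.union_empty, uMaxN_empty, max_eq_left (hge A)]
  unfold uMaxN
  rw [dif_pos (hA.mono Finset.subset_union_left), dif_pos hA, dif_pos hB]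
  exact Finset.sup'_union hA hB u

def wAux (u : ℕ → ℤ) (N : Finset ℕ) : ℚ := (1 - (uMaxN u N : ℚ)) / 2

lemma uMaxN_sup (m : ℕ) (M : Fin m → Finset ℕ) (u : ℕ → ℤ)
    (hu : ∀ k, u k = 1 ∨ u k = -1) (K : Finset (Fin m)) :
    (uMaxN u (K.sup M) : ℚ) = 1 - 2 * ∏ j ∈ K, wAux u (M j) := by
  induction K using Finset.induction with
  | empty =>
    simp [uMaxN_empty]
    norm_num
  | @insert a K ha ih =>
    rw [Finset.sup_insert, Finset.prod_insert ha]
    have hun : M a ⊔ K.sup M = M a ∪ K.sup M := rfl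
    rw [hun, uMaxN_union u hu]
    set P : ℚ := ∏ j ∈ K, wAux u (M j) with hP
    unfold wAux
    rcases uMaxN_pm u hu (M a) with h | h <;>
      rcases uMaxN_pm u hu (K.sup M) with h2 | h2 <;>
      rw [h2] at ih <;> rw [h, h2] <;> push_cast at ih ⊢ <;>
      norm_num <;> linarith

theorem stmt3 (m : ℕ) (M : Fin m → Finset ℕ) (u : ℕ → ℤ)
    (hu : ∀ k, u k = 1 ∨ u k = -1) :
    (∏ k, (uMaxN u (M k) : ℚ)) =
      (1 / 2) * (-1) ^ m - (1 / 2) * ∑ k ∈ Finset.range (m + 1), (-2 : ℚ) ^ k *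
        ∑ K ∈ Finset.univ.filter (fun K : Finset (Fin m) => K.card = k),
          (uMaxN u (K.sup M) : ℚ) := by
  -- push the power inside and collapse the double sum
  have hstep1 : ∀ k ∈ Finset.range (m + 1),
      (-2 : ℚ) ^ k * ∑ K ∈ Finset.univ.filter (fun K : Finset (Fin m) => K.card = k),
          (uMaxN u (K.sup M) : ℚ)
        = ∑ K ∈ Finset.univ.filter (fun K : Finset (Fin m) => K.card = k),
            (-2 : ℚ) ^ K.card * (uMaxN u (K.sup M) : ℚ) := by
    intro k _
    rw [Finset.mul_sum]
    refine Finset.sum_congr rfl fun K hK => ?_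
    rw [(Finset.mem_filter.mp hK).2]
  rw [Finset.sum_congr rfl hstep1]
  have hfib : ∑ k ∈ Finset.range (m + 1),
      ∑ K ∈ Finset.univ.filter (fun K : Finset (Fin m) => K.card = k),
        (-2 : ℚ) ^ K.card * (uMaxN u (K.sup M) : ℚ)
      = ∑ K : Finset (Fin m), (-2 : ℚ) ^ K.card * (uMaxN u (K.sup M) : ℚ) := by
    apply Finset.sum_fiberwise_of_maps_to
    intro K _
    rw [Finset.mem_range, Nat.lt_succ_iff]
    exact le_trans (Finset.card_le_univ K) (by simp)
  rw [hfib]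
  -- substitute the key lemma
  have hsub : ∑ K : Finset (Fin m), (-2 : ℚ) ^ K.card * (uMaxN u (K.sup M) : ℚ)
      = ∑ K : Finset (Fin m),
          ((-2 : ℚ) ^ K.card - 2 * ∏ j ∈ K, ((-2) * wAux u (M j))) := by
    refine Finset.sum_congr rfl fun K _ => ?_
    rw [uMaxN_sup m M u hu K, Finset.prod_mul_distrib, Finset.prod_const]
    ring
  rw [hsub, Finset.sum_sub_distrib, ← Finset.mul_sum]
  have hA : ∑ K : Finset (Fin m), (-2 : ℚ) ^ K.card = (-1) ^ m := by
    have key := Finset.prod_add (fun _ : Fin m => (-2 : ℚ)) (fun _ => 1) Finset.univ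
    rw [Finset.powerset_univ] at key
    simp only [Finset.prod_const_one, mul_one, Finset.prod_const] at key
    rw [← key]
    norm_num
  have hB : ∑ K : Finset (Fin m), ∏ j ∈ K, ((-2 : ℚ) * wAux u (M j))
      = ∏ j : Fin m, (1 - 2 * wAux u (M j)) := by
    have key := Finset.prod_add (fun j : Fin m => (-2 : ℚ) * wAux u (M j))
      (fun _ => 1) Finset.univ
    rw [Finset.powerset_univ] at key
    simp only [Finset.prod_const_one, mul_one] at key
    rw [← key]
    exact Finset.prod_congr rfl fun j _ => by ring
  rw [hA, hB]
  have hL : ∀ j : Fin m, (uMaxN u (M j) : ℚ) = 1 - 2 * wAux u (M j) := by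
    intro j; unfold wAux; ring
  rw [Finset.prod_congr rfl fun j _ => hL j]
  ring
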